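/- Let μ be a probability measure on ℝ with finite second moment whose support contains at least two points. Define F(t,y) = ∫_ℝ exp(uy − u²t/2) μ(du), G(t,y) = (∫_ℝ u exp(uy − u²t/2) μ(du))/F(t,y), and H(t,y) = (∫_ℝ u² exp(uy − u²t/2) μ(du))/F(t,y) − G(t,y)². Then on the strip (0,∞) × ℝ: (i) H(t,y) = ∂_y G(t,y); (ii) H(t,y) > 0; and (iii) G satisfies the backwards Burgers equation ∂_t G + (1/2) ∂²_{yy} G + G · ∂_y G = 0. -/

import Mathlib

open MeasureTheory ProbabilityTheory Real Filter Set
open scoped ENNReal NNReal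

noncomputable section

/-- The Gaussian likelihood kernel `exp(u y - u^2 t / 2)`. -/
def gker (t y u : ℝ) : ℝ := Real.exp (u * y - u ^ 2 * t / 2)

/-- The Widder transform `F(t,y) = ∫ exp(u y - u² t/2) μ(du)` of the measure `μ`. -/
def Fw (μ : Measure ℝ) (t y : ℝ) : ℝ := ∫ u, gker t y u ∂μ

/-- The posterior-mean function `G(t,y)`. -/
def Gp (μ : Measure ℝ) (t y : ℝ) : ℝ := (∫ u, u * gker t y u ∂μ) / Fw μ t y

/-- The posterior-variance function `H(t,y)`. -/
def Hp (μ : Measure ℝ) (t y : ℝ) : ℝ :=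
  (∫ u, u ^ 2 * gker t y u ∂μ) / Fw μ t y - (Gp μ t y) ^ 2

/-- The (topological) support of a measure on `ℝ`. -/
def msupport (μ : Measure ℝ) : Set ℝ := {x | ∀ U ∈ nhds x, μ U ≠ 0}

/-- `I_μ`: the interior of the smallest closed interval containing the support of `μ`,
i.e. the open interval `(inf (supp μ), sup (supp μ))`. -/
def Imu (μ : Measure ℝ) : Set ℝ := interior (convexHull ℝ (msupport μ))

/-- The dispersion function in estimate coordinates: `Ψ(t,x) = H(t, G(t,·)⁻¹(x))`. -/
def Psi (μ : Measure ℝ) (t x : ℝ) : ℝ := Hp μ t (Function.invFun (Gp μ t) x)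

/-- The natural sigma-algebra generated by the observation process `Y` up to time `t`. -/
def natSigma {Ω : Type*} [MeasurableSpace Ω] (Y : ℝ → Ω → ℝ) (t : ℝ) : MeasurableSpace Ω :=
  ⨆ s ∈ Set.Icc (0 : ℝ) t, MeasurableSpace.comap (Y s) inferInstance

/-- The right-continuous augmentation `F^Y(t) = ⋂_{s > t} σ(Y_r, r ≤ s)`
of the filtration generated by `Y`. -/
def obsFiltration {Ω : Type*} [MeasurableSpace Ω] (Y : ℝ → Ω → ℝ) (t : ℝ) :
    MeasurableSpace Ω :=
  ⨅ s ∈ Set.Ioi t, natSigma Y s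

/-- A process `W` is a standard Brownian motion under the probability measure `P`:
it starts at `0`, has continuous paths, Gaussian increments `W t - W s ~ N(0, t - s)`,
and independent increments. -/
structure IsStdBM {Ω : Type*} [MeasurableSpace Ω] (P : Measure Ω) (W : ℝ → Ω → ℝ) : Prop where
  measurable : ∀ t : ℝ, Measurable (W t)
  init : ∀ ω, W 0 ω = 0
  cont : ∀ ω, Continuous fun t => W t ω
  incrLaw : ∀ ⦃s t : ℝ⦄, 0 ≤ s → s ≤ t →
    Measure.map (fun ω => W t ω - W s ω) P = gaussianReal 0 (Real.toNNReal (t - s))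
  indepIncr : ∀ (n : ℕ) (ts : Fin (n + 1) → ℝ), Monotone ts → 0 ≤ ts 0 →
    iIndepFun
      (fun (i : Fin n) ω => W (ts i.succ) ω - W (ts i.castSucc) ω) P

/-- A stopping time of the observation filtration `F^Y`:
`{τ ≤ t} ∈ F^Y(t)` for every `t`. -/
def IsObsStoppingTime {Ω : Type*} [MeasurableSpace Ω] (Y : ℝ → Ω → ℝ) (τ : Ω → ℝ) : Prop :=
  ∀ t : ℝ, MeasurableSet[obsFiltration Y t] {ω | τ ω ≤ t}

namespace BurgersAux

def Mk (μ : Measure ℝ) (k : ℕ) (t y : ℝ) : ℝ := ∫ u, u ^ k * gker t y u ∂μ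

lemma gker_pos (t y u : ℝ) : 0 < gker t y u := Real.exp_pos _

lemma continuous_gker_mul (k : ℕ) (t y : ℝ) :
    Continuous (fun u : ℝ => u ^ k * gker t y u) := by
  unfold gker; fun_prop

lemma key_bound {k : ℕ} {t' t y c : ℝ} (u : ℝ) (ht' : 0 < t') (htt : t' ≤ t) (hyc : |y| ≤ c) :
    ‖u ^ k * gker t y u‖ ≤ (k.factorial : ℝ) * Real.exp ((c + 1) ^ 2 / (2 * t')) := by
  have h1 : ‖u ^ k * gker t y u‖ = |u| ^ k * gker t y u := by
    rw [Real.norm_eq_abs, abs_mul, abs_pow, abs_of_pos (gker_pos t y u)]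
  have hk : (0:ℝ) < (k.factorial : ℝ) := by positivity
  have h2 : |u| ^ k ≤ (k.factorial : ℝ) * Real.exp |u| := by
    have h := Real.pow_div_factorial_le_exp (x := |u|) (abs_nonneg u) k
    rw [div_le_iff₀ hk] at h
    linarith [h]
  have h3 : gker t y u ≤ Real.exp (u * y - u ^ 2 * t / 2) := le_of_eq rfl
  have h4 : |u| + (u * y - u ^ 2 * t / 2) ≤ (c + 1) ^ 2 / (2 * t') := by
    have huy : u * y ≤ |u| * c := by
      calc u * y ≤ |u * y| := le_abs_self _
      _ = |u| * |y| := abs_mul u y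
      _ ≤ |u| * c := by exact mul_le_mul_of_nonneg_left hyc (abs_nonneg u)
    have htq : u ^ 2 * t' / 2 ≤ u ^ 2 * t / 2 := by nlinarith [sq_nonneg u]
    have step : |u| * (c + 1) - u ^ 2 * t' / 2 ≤ (c + 1) ^ 2 / (2 * t') := by
      rw [le_div_iff₀ (by positivity : (0:ℝ) < 2 * t')]
      have ha : u ^ 2 = |u| ^ 2 := (sq_abs u).symm
      rw [ha]
      nlinarith [sq_nonneg (|u| * t' - (c + 1))]
    nlinarith [step, huy, htq]
  calc ‖u ^ k * gker t y u‖ = |u| ^ k * gker t y u := h1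
    _ ≤ ((k.factorial : ℝ) * Real.exp |u|) * Real.exp (u * y - u ^ 2 * t / 2) := by
        exact mul_le_mul h2 h3 (gker_pos t y u).le (by positivity)
    _ = (k.factorial : ℝ) * Real.exp (|u| + (u * y - u ^ 2 * t / 2)) := by
        rw [Real.exp_add]; ring
    _ ≤ (k.factorial : ℝ) * Real.exp ((c + 1) ^ 2 / (2 * t')) := by
        exact mul_le_mul_of_nonneg_left (Real.exp_le_exp.2 h4) hk.le


lemma integrable_Mk (μ : Measure ℝ) [IsProbabilityMeasure μ] (k : ℕ) {t : ℝ} (ht : 0 < t)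
    (y : ℝ) : Integrable (fun u => u ^ k * gker t y u) μ := by
  refine (integrable_const ((k.factorial : ℝ) * Real.exp ((|y| + 1) ^ 2 / (2 * t)))).mono'
    (continuous_gker_mul k t y).aestronglyMeasurable ?_
  exact Filter.Eventually.of_forall fun u => key_bound u ht le_rfl le_rfl

lemma hasDerivAt_gker_y (k : ℕ) (t u z : ℝ) :
    HasDerivAt (fun y => u ^ k * gker t y u) (u ^ (k + 1) * gker t z u) z := by
  have h1 : HasDerivAt (fun y : ℝ => u * y - u ^ 2 * t / 2) u z := by
    simpa using ((hasDerivAt_id z).const_mul u).sub_const (u ^ 2 * t / 2)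
  have h2 := (h1.exp).const_mul (u ^ k)
  refine h2.congr_deriv (Eq.symm ?_)
  show u ^ (k + 1) * gker t z u = u ^ k * (Real.exp (u * z - u ^ 2 * t / 2) * u)
  rw [gker]; ring

lemma hasDerivAt_gker_t (k : ℕ) (y u s : ℝ) :
    HasDerivAt (fun t => u ^ k * gker t y u) ((-2⁻¹ : ℝ) * (u ^ (k + 2) * gker s y u)) s := by
  have heq : (fun t : ℝ => u * y - u ^ 2 * t / 2) = (fun t : ℝ => u * y - u ^ 2 / 2 * t) := by
    funext t; ring
  have h1 : HasDerivAt (fun t : ℝ => u * y - u ^ 2 * t / 2) (-(u ^ 2 / 2)) s := by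
    rw [heq]
    simpa using ((hasDerivAt_id s).const_mul (u ^ 2 / 2)).const_sub (u * y)
  have h2 := (h1.exp).const_mul (u ^ k)
  refine h2.congr_deriv (Eq.symm ?_)
  show (-2⁻¹ : ℝ) * (u ^ (k + 2) * gker s y u)
      = u ^ k * (Real.exp (u * y - u ^ 2 * s / 2) * -(u ^ 2 / 2))
  rw [gker]; ring

lemma hasDerivAt_Mk_y (μ : Measure ℝ) [IsProbabilityMeasure μ] (k : ℕ) {t : ℝ} (ht : 0 < t)
    (y : ℝ) : HasDerivAt (fun z => Mk μ k t z) (Mk μ (k + 1) t y) y := by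
  have h := hasDerivAt_integral_of_dominated_loc_of_deriv_le (μ := μ) (x₀ := y)
    (F := fun z u => u ^ k * gker t z u) (F' := fun z u => u ^ (k + 1) * gker t z u)
    (bound := fun _ => ((k + 1).factorial : ℝ) * Real.exp ((|y| + 1 + 1) ^ 2 / (2 * t)))
    (Metric.ball_mem_nhds y one_pos)
    (Filter.Eventually.of_forall fun z => (continuous_gker_mul k t z).aestronglyMeasurable)
    (integrable_Mk μ k ht y)
    ((continuous_gker_mul (k + 1) t y).aestronglyMeasurable)
    (Filter.Eventually.of_forall fun u z hz => by
      refine key_bound u ht le_rfl ?_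
      have := Metric.mem_ball.1 hz
      rw [Real.dist_eq] at this
      have := abs_sub_abs_le_abs_sub z y
      linarith)
    (integrable_const _)
    (Filter.Eventually.of_forall fun u z _ => hasDerivAt_gker_y k t u z)
  exact h.2

lemma hasDerivAt_Mk_t (μ : Measure ℝ) [IsProbabilityMeasure μ] (k : ℕ) {t : ℝ} (ht : 0 < t)
    (y : ℝ) : HasDerivAt (fun s => Mk μ k s y) ((-2⁻¹ : ℝ) * Mk μ (k + 2) t y) t := by
  have h := hasDerivAt_integral_of_dominated_loc_of_deriv_le (μ := μ) (x₀ := t)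
    (F := fun s u => u ^ k * gker s y u)
    (F' := fun s u => (-2⁻¹ : ℝ) * (u ^ (k + 2) * gker s y u))
    (bound := fun _ => ((k + 2).factorial : ℝ) * Real.exp ((|y| + 1) ^ 2 / (2 * (t / 2))))
    (Metric.ball_mem_nhds t (half_pos ht))
    (Filter.Eventually.of_forall fun s => (continuous_gker_mul k s y).aestronglyMeasurable)
    (integrable_Mk μ k ht y)
    ((continuous_const.mul (continuous_gker_mul (k + 2) t y)).aestronglyMeasurable)
    (Filter.Eventually.of_forall fun u s hs => by
      have hd : dist s t < t / 2 := Metric.mem_ball.1 hs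
      rw [Real.dist_eq, abs_sub_lt_iff] at hd
      have hst : t / 2 ≤ s := by linarith
      calc ‖(-2⁻¹ : ℝ) * (u ^ (k + 2) * gker s y u)‖
          = 2⁻¹ * ‖u ^ (k + 2) * gker s y u‖ := by
            rw [norm_mul]; norm_num
        _ ≤ ‖u ^ (k + 2) * gker s y u‖ := by
            have := norm_nonneg (u ^ (k + 2) * gker s y u); linarith
        _ ≤ ((k + 2).factorial : ℝ) * Real.exp ((|y| + 1) ^ 2 / (2 * (t / 2))) :=
            key_bound u (half_pos ht) hst le_rfl)
    (integrable_const _)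
    (Filter.Eventually.of_forall fun u s _ => hasDerivAt_gker_t k y u s)
  have h2 := h.2
  rwa [integral_const_mul] at h2

lemma Mk_zero_pos (μ : Measure ℝ) [IsProbabilityMeasure μ] {t : ℝ} (ht : 0 < t) (y : ℝ) :
    0 < Mk μ 0 t y := by
  rw [Mk, integral_pos_iff_support_of_nonneg]
  · have : (Function.support fun u => u ^ (0:ℕ) * gker t y u) = Set.univ := by
      ext u; simp [Function.support, (gker_pos t y u).ne']
    rw [this]
    simp [IsProbabilityMeasure.measure_univ]
  · intro u; simp only [pow_zero, one_mul]; exact (gker_pos t y u).le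
  · exact integrable_Mk μ 0 ht y

end BurgersAux

/-- on `(0,∞) × ℝ`, the posterior variance `H` is the spatial derivative of
the posterior mean `G`; `H > 0`; and `G` solves the backwards Burgers equation
`∂_t G + (1/2) ∂²_{yy} G + G ∂_y G = 0`. -/
theorem posterior_mean_burgers
    (μ : Measure ℝ) [IsProbabilityMeasure μ] (hμ2 : Integrable (fun u => u ^ 2) μ)
    (htwo : ∃ a b : ℝ, a ∈ msupport μ ∧ b ∈ msupport μ ∧ a ≠ b)
    (t : ℝ) (ht : 0 < t) (y : ℝ) :
    HasDerivAt (fun z => Gp μ t z) (Hp μ t y) y ∧ 0 < Hp μ t y ∧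
      deriv (fun s => Gp μ s y) t + (1 / 2) * iteratedDeriv 2 (fun z => Gp μ t z) y +
        Gp μ t y * deriv (fun z => Gp μ t z) y = 0 := by
  
  classical
  have hFM : ∀ s z : ℝ, Fw μ s z = BurgersAux.Mk μ 0 s z := fun s z => by
    simp [Fw, BurgersAux.Mk]
  have hGM : ∀ s z : ℝ, Gp μ s z = BurgersAux.Mk μ 1 s z / BurgersAux.Mk μ 0 s z := fun s z => by
    simp [Gp, BurgersAux.Mk, hFM]
  have hHM : ∀ s z : ℝ, Hp μ s z = BurgersAux.Mk μ 2 s z / BurgersAux.Mk μ 0 s z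
      - (BurgersAux.Mk μ 1 s z / BurgersAux.Mk μ 0 s z) ^ 2 := fun s z => by
    simp [Hp, Gp, BurgersAux.Mk, hFM]
  have hpos : ∀ z : ℝ, 0 < BurgersAux.Mk μ 0 t z := fun z => BurgersAux.Mk_zero_pos μ ht z
  have hne : ∀ z : ℝ, BurgersAux.Mk μ 0 t z ≠ 0 := fun z => (hpos z).ne'
  -- Part 1
  have hDG : ∀ z : ℝ, HasDerivAt (fun w => Gp μ t w)
      ((BurgersAux.Mk μ 2 t z * BurgersAux.Mk μ 0 t z
        - BurgersAux.Mk μ 1 t z * BurgersAux.Mk μ 1 t z) / (BurgersAux.Mk μ 0 t z) ^ 2) z := by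
    intro z
    have h := (BurgersAux.hasDerivAt_Mk_y μ 1 ht z).div (BurgersAux.hasDerivAt_Mk_y μ 0 ht z)
      (hne z)
    have heq : (fun w => Gp μ t w) = fun w => BurgersAux.Mk μ 1 t w / BurgersAux.Mk μ 0 t w :=
      funext fun w => hGM t w
    rw [heq]; exact h
  have hHval : ∀ z : ℝ, Hp μ t z = (BurgersAux.Mk μ 2 t z * BurgersAux.Mk μ 0 t z
      - BurgersAux.Mk μ 1 t z * BurgersAux.Mk μ 1 t z) / (BurgersAux.Mk μ 0 t z) ^ 2 := by
    intro z
    rw [hHM t z]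
    field_simp [hne z]
  have part1 : HasDerivAt (fun z => Gp μ t z) (Hp μ t y) y := by
    rw [hHval y]; exact hDG y
  -- Part 2
  have hg : Gp μ t y = BurgersAux.Mk μ 1 t y / BurgersAux.Mk μ 0 t y := hGM t y
  have hexp : (fun u => (u - Gp μ t y) ^ 2 * gker t y u)
      = fun u => (u ^ 2 * gker t y u - 2 * Gp μ t y * (u ^ 1 * gker t y u))
          + (Gp μ t y) ^ 2 * (u ^ 0 * gker t y u) := by
    funext u; ring
  have hC : Integrable (fun u => 2 * Gp μ t y * (u ^ 1 * gker t y u)) μ :=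
    (BurgersAux.integrable_Mk μ 1 ht y).const_mul (2 * Gp μ t y)
  have hB : Integrable (fun u => (Gp μ t y) ^ 2 * (u ^ 0 * gker t y u)) μ :=
    (BurgersAux.integrable_Mk μ 0 ht y).const_mul ((Gp μ t y) ^ 2)
  have hA : Integrable
      (fun u => u ^ 2 * gker t y u - 2 * Gp μ t y * (u ^ 1 * gker t y u)) μ :=
    (BurgersAux.integrable_Mk μ 2 ht y).sub hC
  have hintb : Integrable (fun u => (u - Gp μ t y) ^ 2 * gker t y u) μ := by
    rw [hexp]; exact hA.add hB
  have hint_eq : ∫ u, (u - Gp μ t y) ^ 2 * gker t y u ∂μ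
      = BurgersAux.Mk μ 2 t y - 2 * Gp μ t y * BurgersAux.Mk μ 1 t y
        + (Gp μ t y) ^ 2 * BurgersAux.Mk μ 0 t y := by
    rw [hexp, integral_add hA hB, integral_sub (BurgersAux.integrable_Mk μ 2 ht y) hC,
      integral_const_mul, integral_const_mul]
    rfl
  have hnum : 0 < ∫ u, (u - Gp μ t y) ^ 2 * gker t y u ∂μ := by
    rw [integral_pos_iff_support_of_nonneg]
    · have hsupp : (Function.support fun u => (u - Gp μ t y) ^ 2 * gker t y u)
          = {Gp μ t y}ᶜ := by
        ext u
        simp [Function.mem_support, (BurgersAux.gker_pos t y u).ne', sub_eq_zero,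
          pow_eq_zero_iff]
      rw [hsupp, pos_iff_ne_zero]
      obtain ⟨a, b, ha, hb, hab⟩ := htwo
      rcases eq_or_ne a (Gp μ t y) with hag | hag
      · exact hb _ (isOpen_compl_singleton.mem_nhds
          (Set.mem_compl_singleton_iff.2 (hag ▸ hab.symm)))
      · exact ha _ (isOpen_compl_singleton.mem_nhds (Set.mem_compl_singleton_iff.2 hag))
    · intro u
      exact mul_nonneg (sq_nonneg _) (BurgersAux.gker_pos t y u).le
    · exact hintb
  have part2 : 0 < Hp μ t y := by
    have heq : Hp μ t y = (∫ u, (u - Gp μ t y) ^ 2 * gker t y u ∂μ) / BurgersAux.Mk μ 0 t y := by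
      rw [hint_eq, hHM t y, hg]
      field_simp [hne y]
      ring
    rw [heq]
    exact div_pos hnum (hpos y)
  -- Part 3
  refine ⟨part1, part2, ?_⟩
  have hDt : HasDerivAt (fun s => Gp μ s y)
      (((-2⁻¹ : ℝ) * BurgersAux.Mk μ 3 t y * BurgersAux.Mk μ 0 t y
        - BurgersAux.Mk μ 1 t y * ((-2⁻¹ : ℝ) * BurgersAux.Mk μ 2 t y))
        / (BurgersAux.Mk μ 0 t y) ^ 2) t := by
    have h := (BurgersAux.hasDerivAt_Mk_t μ 1 ht y).div (BurgersAux.hasDerivAt_Mk_t μ 0 ht y)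
      (hne y)
    have heq : (fun s => Gp μ s y) = fun s => BurgersAux.Mk μ 1 s y / BurgersAux.Mk μ 0 s y :=
      funext fun s => hGM s y
    rw [heq]
    exact h
  have hderivG : (deriv fun z => Gp μ t z) = fun z => Hp μ t z := by
    funext z
    have h : HasDerivAt (fun w => Gp μ t w) (Hp μ t z) z := by
      rw [hHval z]; exact hDG z
    exact h.deriv
  have hHfun : (fun z => Hp μ t z) = fun z => BurgersAux.Mk μ 2 t z / BurgersAux.Mk μ 0 t z
      - (BurgersAux.Mk μ 1 t z / BurgersAux.Mk μ 0 t z) ^ 2 := funext fun z => hHM t z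
  have hDH : HasDerivAt (fun z => Hp μ t z)
      ((BurgersAux.Mk μ 3 t y * BurgersAux.Mk μ 0 t y
          - BurgersAux.Mk μ 2 t y * BurgersAux.Mk μ 1 t y) / (BurgersAux.Mk μ 0 t y) ^ 2
        - 2 * (BurgersAux.Mk μ 1 t y / BurgersAux.Mk μ 0 t y)
          * ((BurgersAux.Mk μ 2 t y * BurgersAux.Mk μ 0 t y
            - BurgersAux.Mk μ 1 t y * BurgersAux.Mk μ 1 t y)
            / (BurgersAux.Mk μ 0 t y) ^ 2)) y := by
    have h1 := (BurgersAux.hasDerivAt_Mk_y μ 2 ht y).div (BurgersAux.hasDerivAt_Mk_y μ 0 ht y)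
      (hne y)
    have h2 := ((BurgersAux.hasDerivAt_Mk_y μ 1 ht y).div (BurgersAux.hasDerivAt_Mk_y μ 0 ht y)
      (hne y)).pow 2
    have h := h1.sub h2
    rw [hHfun]
    refine h.congr_deriv ?_
    norm_num
  have hiter : iteratedDeriv 2 (fun z => Gp μ t z) y = deriv (fun z => Hp μ t z) y := by
    rw [iteratedDeriv_succ, iteratedDeriv_one, hderivG]
  rw [hDt.deriv, hiter, hDH.deriv, part1.deriv, hGM t y, hHM t y]
  have h0 : BurgersAux.Mk μ 0 t y ≠ 0 := hne y
  field_simp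
  ring
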